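/- Fix N ∈ ℕ, constants ρ, c > 0, and points t₁,…,t_m ∈ ℝ^d. For k ∈ Z_N^d := {−N,…,N}^d define complex vectors u_k, v_k ∈ ℂ^m by (u_k)_j = exp(2πi⟨k,t_j⟩) and (v_k)_j = exp(−2πi⟨k,t_j⟩), and for a real p×d matrix Λ of full rank d define φ_Λ(k) = ρ (2π)^{d/2} c^{−1} exp(−2π² c^{−2/d} det(ΛᵀΛ)^{1/d} kᵀ(ΛᵀΛ)^{−1}k) and the m×m complex matrix C^app(Λ) = Σ_{k∈Z_N^d} [φ_Λ(k)/(1−φ_Λ(k))] u_k v_kᵀ. Suppose φ_Λ(k) < 1 for all k ∈ Z_N^d and C^app(Λ) is invertible. Then for every entry index (a,b) with 1 ≤ a ≤ p, 1 ≤ b ≤ d, the partial derivative of the map Λ ↦ det C^app(Λ) with respect to the (a,b) entry of Λ equals det(C^app(Λ)) · (−2π² c^{−2/d}) · Σ_{k∈Z_N^d} [φ_Λ(k)/(1−φ_Λ(k))²] · g^{(k)}(Λ)_{ab} · (v_kᵀ (C^app(Λ))^{−1} u_k), where g^{(k)}(Λ) = 2 det(ΛᵀΛ)^{1/d} Λ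 (ΛᵀΛ)^{−1} [ (1/d)(kᵀ(ΛᵀΛ)^{−1}k) I_d − k kᵀ (ΛᵀΛ)^{−1} ]. -/

import Mathlib

open Matrix Real

/-- The gradient matrix `g^{(k)}(Λ)`. -/
noncomputable def gMat {p d : ℕ} (k : Fin d → ℝ) (Λ : Matrix (Fin p) (Fin d) ℝ) :
    Matrix (Fin p) (Fin d) ℝ :=
  (2 * (Λᵀ * Λ).det ^ ((1 : ℝ) / d)) •
    (Λ * (Λᵀ * Λ)⁻¹ *
      (((k ⬝ᵥ ((Λᵀ * Λ)⁻¹ *ᵥ k)) / d) • (1 : Matrix (Fin d) (Fin d) ℝ) -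
        Matrix.vecMulVec k k * (Λᵀ * Λ)⁻¹))

/-- The Gaussian-like spectral density `φ_Λ(k)`. -/
noncomputable def phiGauss {p d : ℕ} (ρ c : ℝ) (k : Fin d → ℝ)
    (Λ : Matrix (Fin p) (Fin d) ℝ) : ℝ :=
  ρ * (2 * π) ^ ((d : ℝ) / 2) / c *
    Real.exp (-(2 * π ^ 2 * c ^ (-(2 : ℝ) / d) * (Λᵀ * Λ).det ^ ((1 : ℝ) / d) *
      (k ⬝ᵥ ((Λᵀ * Λ)⁻¹ *ᵥ k))))

/-- The lattice `Z_N^d = {-N, …, N}^d`. -/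
noncomputable def latticeZN (d N : ℕ) : Finset (Fin d → ℤ) :=
  Fintype.piFinset fun _ => Finset.Icc (-(N : ℤ)) (N : ℤ)

/-- `(u_k)_j = exp(2πi⟨k, t_j⟩)`. -/
noncomputable def uVec {d m : ℕ} (t : Fin m → (Fin d → ℝ)) (k : Fin d → ℤ) :
    Fin m → ℂ :=
  fun j => Complex.exp (2 * π * Complex.I * (((fun i => (k i : ℝ)) ⬝ᵥ t j : ℝ) : ℂ))

/-- `(v_k)_j = exp(−2πi⟨k, t_j⟩)`. -/
noncomputable def vVec {d m : ℕ} (t : Fin m → (Fin d → ℝ)) (k : Fin d → ℤ) :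
    Fin m → ℂ :=
  fun j => Complex.exp (-(2 * π * Complex.I * (((fun i => (k i : ℝ)) ⬝ᵥ t j : ℝ) : ℂ)))

/-- The truncated spectral approximation `C^app(Λ) = Σ_k φ/(1−φ) u_k v_kᵀ`. -/
noncomputable def CappG {p d m : ℕ} (ρ c : ℝ) (N : ℕ) (t : Fin m → (Fin d → ℝ))
    (L : Matrix (Fin p) (Fin d) ℝ) : Matrix (Fin m) (Fin m) ℂ :=
  ∑ k ∈ latticeZN d N,
    ((phiGauss ρ c (fun i => (k i : ℝ)) L /
        (1 - phiGauss ρ c (fun i => (k i : ℝ)) L) : ℝ) : ℂ) •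
      Matrix.vecMulVec (uVec t k) (vVec t k)


open Finset
set_option linter.unusedSectionVars false
set_option linter.unusedVariables false

attribute [local instance] Matrix.linftyOpNormedRing Matrix.linftyOpNormedAlgebra

section Aux

variable {n : ℕ} {𝔸 : Type*} [NormedCommRing 𝔸] [NormedAlgebra ℝ 𝔸]

lemma det_expand (M : Matrix (Fin n) (Fin n) 𝔸) :
    M.det = ∑ σ : Equiv.Perm (Fin n), ((Equiv.Perm.sign σ : ℤ) : 𝔸) * ∏ i, M (σ i) i := by
  rw [Matrix.det_apply]
  congr 1; ext σ; rw [Units.smul_def, zsmul_eq_mul]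

lemma updateColumn_det_expand (M : Matrix (Fin n) (Fin n) 𝔸) (i : Fin n) (c : Fin n → 𝔸) :
    (M.updateCol i c).det =
      ∑ σ : Equiv.Perm (Fin n), ((Equiv.Perm.sign σ : ℤ) : 𝔸) *
        (c (σ i) * ∏ j ∈ Finset.univ.erase i, M (σ j) j) := by
  rw [det_expand]
  congr 1; ext σ
  congr 1
  rw [← Finset.mul_prod_erase _ _ (Finset.mem_univ i)]
  congr 1
  · simp [Matrix.updateCol_apply]
  · exact Finset.prod_congr rfl fun j hj => by
      simp [Matrix.updateCol_apply, Finset.ne_of_mem_erase hj]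

lemma hasDerivAt_det {A : ℝ → Matrix (Fin n) (Fin n) 𝔸} {B : Matrix (Fin n) (Fin n) 𝔸} {x : ℝ}
    (h : ∀ i j, HasDerivAt (fun s => A s i j) (B i j) x) :
    HasDerivAt (fun s => (A s).det) ((Matrix.adjugate (A x) * B).trace) x := by
  have key : HasDerivAt (fun s => (A s).det)
      (∑ σ : Equiv.Perm (Fin n), ((Equiv.Perm.sign σ : ℤ) : 𝔸) *
        ∑ i, (∏ j ∈ Finset.univ.erase i, A x (σ j) j) • B (σ i) i) x := by
    simp only [det_expand]
    exact HasDerivAt.fun_sum fun σ _ =>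
      (HasDerivAt.fun_finsetProd fun i _ => h (σ i) i).const_mul _
  convert key using 1
  have htr : (Matrix.adjugate (A x) * B).trace
      = ∑ i, ((A x).updateCol i (fun r => B r i)).det := by
    simp only [← Matrix.cramer_apply, Matrix.cramer_eq_adjugate_mulVec]
    simp [Matrix.trace, Matrix.diag, Matrix.mul_apply, Matrix.mulVec, dotProduct]
  rw [htr]
  simp only [updateColumn_det_expand, smul_eq_mul, Finset.mul_sum]
  rw [Finset.sum_comm]
  congr 1; ext i; congr 1; ext σ; ring

attribute [local instance] Matrix.linftyOpNormedRing Matrix.linftyOpNormedAlgebra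

variable {d p : ℕ}

-- matrix path and its derivative
lemma path_eq (Λ E : Matrix (Fin p) (Fin d) ℝ) (s : ℝ) :
    (Λ + s • E)ᵀ * (Λ + s • E) =
      Λᵀ * Λ + s • (Eᵀ * Λ + Λᵀ * E) + (s * s) • (Eᵀ * E) := by
  simp only [Matrix.transpose_add, Matrix.transpose_smul, Matrix.add_mul, Matrix.mul_add,
    Matrix.smul_mul, Matrix.mul_smul, smul_add, smul_smul]
  abel

lemma hasDerivAt_path (Λ E : Matrix (Fin p) (Fin d) ℝ) :
    HasDerivAt (fun s : ℝ => (Λ + s • E)ᵀ * (Λ + s • E)) (Eᵀ * Λ + Λᵀ * E) 0 := by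
  have h1 : HasDerivAt (fun s : ℝ => Λᵀ * Λ + s • (Eᵀ * Λ + Λᵀ * E) + (s * s) • (Eᵀ * E))
      (Eᵀ * Λ + Λᵀ * E) 0 := by
    have ha : HasDerivAt (fun s : ℝ => s • (Eᵀ * Λ + Λᵀ * E)) ((1:ℝ) • (Eᵀ * Λ + Λᵀ * E)) 0 :=
      (hasDerivAt_id 0).smul_const _
    have hb : HasDerivAt (fun s : ℝ => (s * s) • (Eᵀ * E))
        ((1 * 0 + 0 * 1 : ℝ) • (Eᵀ * E)) 0 :=
      ((hasDerivAt_id 0).mul (hasDerivAt_id 0)).smul_const _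
    have h1' := (ha.const_add (Λᵀ * Λ)).fun_add hb
    simp at h1' ⊢
    exact h1'
  convert h1 using 2 with s
  exact path_eq Λ E s

-- inverse derivative
lemma hasDerivAt_inv_path (Λ E : Matrix (Fin p) (Fin d) ℝ) (hU : IsUnit (Λᵀ * Λ)) :
    HasDerivAt (fun s : ℝ => ((Λ + s • E)ᵀ * (Λ + s • E))⁻¹)
      (-((Λᵀ * Λ)⁻¹ * (Eᵀ * Λ + Λᵀ * E) * (Λᵀ * Λ)⁻¹)) 0 := by
  have hM := hasDerivAt_path Λ E
  have h0 : (Λ + (0:ℝ) • E)ᵀ * (Λ + (0:ℝ) • E) = Λᵀ * Λ := by simp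
  set u := hU.unit with hu
  have hinv : HasDerivAt (fun s : ℝ => Ring.inverse ((Λ + s • E)ᵀ * (Λ + s • E)))
      (-((Λᵀ * Λ)⁻¹ * (Eᵀ * Λ + Λᵀ * E) * (Λᵀ * Λ)⁻¹)) 0 := by
    have hf := hasFDerivAt_ringInverse (𝕜 := ℝ) (R := Matrix (Fin d) (Fin d) ℝ) u
    have hx : (Λ + (0:ℝ) • E)ᵀ * (Λ + (0:ℝ) • E) = (u : Matrix (Fin d) (Fin d) ℝ) := by
      rw [h0, hu, IsUnit.unit_spec]
    rw [← hx] at hf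
    have hcomp := hf.comp_hasDerivAt (0:ℝ) hM
    have hval : (-((ContinuousLinearMap.mulLeftRight ℝ (Matrix (Fin d) (Fin d) ℝ)) ↑u⁻¹) ↑u⁻¹)
        (Eᵀ * Λ + Λᵀ * E) = -((Λᵀ * Λ)⁻¹ * (Eᵀ * Λ + Λᵀ * E) * (Λᵀ * Λ)⁻¹) := by
      have hcoe : ((u⁻¹ : (Matrix (Fin d) (Fin d) ℝ)ˣ) : Matrix (Fin d) (Fin d) ℝ)
          = (Λᵀ * Λ)⁻¹ := by
        rw [Matrix.coe_units_inv, hu, IsUnit.unit_spec]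
      simp [ContinuousLinearMap.mulLeftRight_apply, hcoe]
    rw [hval] at hcomp
    exact hcomp
  have : (fun s : ℝ => ((Λ + s • E)ᵀ * (Λ + s • E))⁻¹)
      = fun s : ℝ => Ring.inverse ((Λ + s • E)ᵀ * (Λ + s • E)) := by
    funext s; rw [Matrix.nonsing_inv_eq_ringInverse]
  rw [this]
  exact hinv

variable {p d : ℕ}

lemma trace_mul_single {α β : Type*} [Fintype α] [Fintype β] [DecidableEq α] [DecidableEq β]
    (Y : Matrix α β ℝ) (i : α) (j : β) :
    (Y * Matrix.single j i (1:ℝ)).trace = Y i j := by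
  simp [Matrix.trace, Matrix.diag, Matrix.mul_apply, Matrix.single, Matrix.of_apply,
    ite_and]

lemma transpose_single (a : Fin p) (b : Fin d) :
    (Matrix.single a b (1:ℝ))ᵀ = Matrix.single b a 1 := by
  ext i j; simp [Matrix.single, Matrix.transpose_apply, and_comm]

lemma trace_ND (Λ : Matrix (Fin p) (Fin d) ℝ) (a : Fin p) (b : Fin d)
    (N : Matrix (Fin d) (Fin d) ℝ) (hNs : Nᵀ = N) :
    (N * ((Matrix.single a b (1:ℝ))ᵀ * Λ + Λᵀ * Matrix.single a b (1:ℝ))).trace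
      = 2 * (Λ * N) a b := by
  have hN : ∀ i j, N i j = N j i := fun i j => by conv_lhs => rw [← hNs, Matrix.transpose_apply]
  rw [Matrix.mul_add, Matrix.trace_add]
  have h1 : (N * ((Matrix.single a b (1:ℝ))ᵀ * Λ)).trace = (Λ * N) a b := by
    rw [← Matrix.mul_assoc, ← Matrix.trace_mul_cycle, transpose_single, Matrix.mul_assoc,
      Matrix.trace_mul_comm, _root_.trace_mul_single]
  have h2 : (N * (Λᵀ * Matrix.single a b (1:ℝ))).trace = (Λ * N) a b := by
    rw [← Matrix.mul_assoc, _root_.trace_mul_single]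
    simp only [Matrix.mul_apply, Matrix.transpose_apply]
    exact Finset.sum_congr rfl fun r _ => by rw [hN b r]; ring
  rw [h1, h2]; ring

lemma single_mulVec' {α β : Type*} [Fintype β] [DecidableEq α] [DecidableEq β]
    (i : α) (j : β) (u : β → ℝ) :
    Matrix.single i j (1:ℝ) *ᵥ u = Pi.single i (u j) := by
  funext r
  simp [Matrix.mulVec, dotProduct, Matrix.single, ite_and, Pi.single_apply,
    eq_comm]

lemma quad_ND (Λ : Matrix (Fin p) (Fin d) ℝ) (a : Fin p) (b : Fin d) (k : Fin d → ℝ)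
    (N : Matrix (Fin d) (Fin d) ℝ) (hNs : Nᵀ = N) :
    k ⬝ᵥ ((N * ((Matrix.single a b (1:ℝ))ᵀ * Λ + Λᵀ * Matrix.single a b (1:ℝ)) * N) *ᵥ k)
      = 2 * (Λ *ᵥ (N *ᵥ k)) a * (N *ᵥ k) b := by
  have hkN : k ᵥ* N = N *ᵥ k := by conv_lhs => rw [← hNs, Matrix.vecMul_transpose]
  rw [Matrix.mul_add, Matrix.add_mul, Matrix.add_mulVec, dotProduct_add]
  have h1 : k ⬝ᵥ ((N * ((Matrix.single a b (1:ℝ))ᵀ * Λ) * N) *ᵥ k)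
      = (N *ᵥ k) b * (Λ *ᵥ (N *ᵥ k)) a := by
    rw [← Matrix.mulVec_mulVec, ← Matrix.mulVec_mulVec, dotProduct_mulVec, hkN,
      transpose_single, ← Matrix.mulVec_mulVec, single_mulVec', dotProduct_single]
  have h2 : k ⬝ᵥ ((N * (Λᵀ * Matrix.single a b (1:ℝ)) * N) *ᵥ k)
      = (Λ *ᵥ (N *ᵥ k)) a * (N *ᵥ k) b := by
    rw [← Matrix.mulVec_mulVec, ← Matrix.mulVec_mulVec, dotProduct_mulVec, hkN,
      ← Matrix.mulVec_mulVec, dotProduct_mulVec, Matrix.vecMul_transpose,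
      single_mulVec', dotProduct_single]
  rw [h1, h2]; ring

lemma gMat_entry (Λ : Matrix (Fin p) (Fin d) ℝ) (a : Fin p) (b : Fin d) (k : Fin d → ℝ)
    (N : Matrix (Fin d) (Fin d) ℝ) (hNs : Nᵀ = N) (q0 dp : ℝ) :
    ((2 * dp) •
      (Λ * N * ((q0 / d) • (1 : Matrix (Fin d) (Fin d) ℝ) - Matrix.vecMulVec k k * N))) a b
      = 2 * dp * (q0 / d * (Λ * N) a b - (Λ *ᵥ (N *ᵥ k)) a * (N *ᵥ k) b) := by
  have hkN : k ᵥ* N = N *ᵥ k := by conv_lhs => rw [← hNs, Matrix.vecMul_transpose]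
  rw [Matrix.smul_apply, smul_eq_mul]
  congr 1
  rw [Matrix.mul_sub, Matrix.sub_apply]
  congr 1
  · rw [Matrix.mul_smul, Matrix.smul_apply, Matrix.mul_one, smul_eq_mul]
  · have : Matrix.vecMulVec k k * N = Matrix.vecMulVec k (N *ᵥ k) := by
      funext i j
      simp only [Matrix.mul_apply, Matrix.vecMulVec_apply, ← hkN, Matrix.vecMul]
      simp [dotProduct, Finset.mul_sum, mul_assoc]
    rw [this, Matrix.mulVec_mulVec]
    simp only [Matrix.mul_apply, Matrix.vecMulVec_apply, Matrix.mulVec, dotProduct,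
      Finset.sum_mul]
    exact Finset.sum_congr rfl fun r _ => by
      simp only [Finset.sum_mul, Finset.mul_sum]
      exact Finset.sum_congr rfl fun _ _ => Finset.sum_congr rfl fun _ _ => by ring

variable {p d : ℕ}

lemma gram_posDef (Λ : Matrix (Fin p) (Fin d) ℝ) (hΛ : Λ.rank = d) : (Λᵀ * Λ).PosDef := by
  have hker : LinearMap.ker Λ.mulVecLin = ⊥ := by
    have h1 := Λ.mulVecLin.finrank_range_add_finrank_ker
    have h2 : Module.finrank ℝ (Fin d → ℝ) = d := by simp
    rw [h2] at h1
    have h3 : Module.finrank ℝ (LinearMap.range Λ.mulVecLin) = d := hΛ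
    rw [h3] at h1
    have h4 : Module.finrank ℝ (LinearMap.ker Λ.mulVecLin) = 0 := by omega
    exact Submodule.finrank_eq_zero.mp h4
  refine Matrix.posDef_iff_dotProduct_mulVec.mpr ⟨?_, fun x hx => ?_⟩
  · have := Matrix.isHermitian_conjTranspose_mul_self Λ
    rwa [Matrix.conjTranspose_eq_transpose_of_trivial] at this
  · have hx' : Λ *ᵥ x ≠ 0 := by
      intro h
      have : x ∈ LinearMap.ker Λ.mulVecLin := by simpa [Matrix.mulVecLin_apply] using h
      rw [hker, Submodule.mem_bot] at this
      exact hx this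
    have heq : star x ⬝ᵥ ((Λᵀ * Λ) *ᵥ x) = (Λ *ᵥ x) ⬝ᵥ (Λ *ᵥ x) := by
      rw [star_trivial, ← Matrix.mulVec_mulVec, dotProduct_mulVec,
        Matrix.vecMul_transpose]
    rw [heq]
    have := dotProduct_self_star_pos_iff (v := Λ *ᵥ x)
    rw [star_trivial] at this
    exact this.mpr hx'

end Aux

noncomputable def qCLM (k : Fin d → ℝ) : Matrix (Fin d) (Fin d) ℝ →L[ℝ] ℝ :=
  LinearMap.toContinuousLinearMap
    { toFun := fun X => k ⬝ᵥ (X *ᵥ k)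
      map_add' := fun X Y => by
        rw [Matrix.add_mulVec, dotProduct_add]
      map_smul' := fun r X => by
        rw [Matrix.smul_mulVec, dotProduct_smul, RingHom.id_apply, smul_eq_mul]
      }

lemma qCLM_apply (k : Fin d → ℝ) (X : Matrix (Fin d) (Fin d) ℝ) :
    qCLM k X = k ⬝ᵥ (X *ᵥ k) := rfl

noncomputable def entryCLM (i j : Fin d) : Matrix (Fin d) (Fin d) ℝ →L[ℝ] ℝ :=
  LinearMap.toContinuousLinearMap
    { toFun := fun X => X i j
      map_add' := fun X Y => rfl
      map_smul' := fun r X => rfl }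

lemma trace_mul_vecMulVec {m : ℕ} (Adj : Matrix (Fin m) (Fin m) ℂ) (u v : Fin m → ℂ) :
    (Adj * Matrix.vecMulVec u v).trace = v ⬝ᵥ (Adj *ᵥ u) := by
  simp only [Matrix.trace, Matrix.diag, Matrix.mul_apply, Matrix.vecMulVec_apply,
    dotProduct, Matrix.mulVec, Finset.mul_sum]
  exact Finset.sum_congr rfl fun i _ => Finset.sum_congr rfl fun j _ => by ring

lemma adjugate_eq_det_smul_inv {m : ℕ} {𝕜 : Type*} [Field 𝕜] (C : Matrix (Fin m) (Fin m) 𝕜)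
    (h : IsUnit C.det) : C.adjugate = C.det • C⁻¹ := by
  rw [Matrix.inv_def, smul_smul, Ring.inverse_eq_inv', mul_inv_cancel₀ h.ne_zero, one_smul]

section Chain
variable {p d : ℕ}

lemma hasDerivAt_fk (Λ : Matrix (Fin p) (Fin d) ℝ) (hΛ : Λ.rank = d) (hd : 1 ≤ d)
    (ρ c : ℝ) (k : Fin d → ℝ) (a : Fin p) (b : Fin d)
    (hlt : phiGauss ρ c k Λ < 1) :
    HasDerivAt (fun s : ℝ => phiGauss ρ c k (Λ + s • Matrix.single a b 1) /
        (1 - phiGauss ρ c k (Λ + s • Matrix.single a b 1)))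
      (-(2 * π ^ 2 * c ^ (-(2:ℝ)/d)) *
        (phiGauss ρ c k Λ / (1 - phiGauss ρ c k Λ) ^ 2 * gMat k Λ a b)) 0 := by
  classical
  set E : Matrix (Fin p) (Fin d) ℝ := Matrix.single a b 1 with hE
  set M0 : Matrix (Fin d) (Fin d) ℝ := Λᵀ * Λ with hM0
  set Nm : Matrix (Fin d) (Fin d) ℝ := M0⁻¹ with hNm
  set D : Matrix (Fin d) (Fin d) ℝ := Eᵀ * Λ + Λᵀ * E with hD
  have hdn : (d : ℝ) ≠ 0 := Nat.cast_ne_zero.mpr (by omega)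
  have hPD : M0.PosDef := gram_posDef Λ hΛ
  have hdet0 : 0 < M0.det := hPD.det_pos
  have hU : IsUnit M0 := (Matrix.isUnit_iff_isUnit_det _).2 hdet0.ne'.isUnit
  have hNs : Nmᵀ = Nm := by
    rw [hNm, Matrix.transpose_nonsing_inv, hM0, Matrix.transpose_mul,
      Matrix.transpose_transpose]
  have h0 : (Λ + (0:ℝ) • E)ᵀ * (Λ + (0:ℝ) • E) = M0 := by simp [hM0]
  -- derivative of the path entries
  have hMs := hasDerivAt_path Λ E
  have hent : ∀ i j : Fin d,
      HasDerivAt (fun s : ℝ => ((Λ + s • E)ᵀ * (Λ + s • E)) i j) (D i j) 0 := by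
    intro i j
    have := (entryCLM i j).hasFDerivAt.comp_hasDerivAt (0:ℝ) hMs
    exact this
  -- derivative of det
  have hdet : HasDerivAt (fun s : ℝ => (((Λ + s • E)ᵀ * (Λ + s • E))).det)
      (M0.det * (Nm * D).trace) 0 := by
    have := hasDerivAt_det (A := fun s : ℝ => (Λ + s • E)ᵀ * (Λ + s • E)) (B := D) (x := 0) hent
    simp only [h0] at this
    refine this.congr_deriv ?_
    have hadj : M0.det • M0⁻¹ = Matrix.adjugate M0 := by
      rw [Matrix.inv_def, smul_smul, Ring.inverse_eq_inv', mul_inv_cancel₀ hdet0.ne', one_smul]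
    rw [← hadj, ← hNm, Matrix.smul_mul, Matrix.trace_smul, smul_eq_mul]
  -- derivative of det ^ (1/d)
  have hψ : HasDerivAt (fun s : ℝ => (((Λ + s • E)ᵀ * (Λ + s • E))).det ^ ((1:ℝ)/d))
      (M0.det * (Nm * D).trace * ((1:ℝ)/d) * M0.det ^ ((1:ℝ)/d - 1)) 0 := by
    have := hdet.rpow_const (p := (1:ℝ)/d) (Or.inl (by simp only [h0]; exact hdet0.ne'))
    simp only [h0] at this
    exact this
  -- derivative of inverse and q
  have hinv := hasDerivAt_inv_path Λ E hU
  have hq : HasDerivAt (fun s : ℝ => k ⬝ᵥ ((((Λ + s • E)ᵀ * (Λ + s • E))⁻¹) *ᵥ k))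
      (-(k ⬝ᵥ ((Nm * D * Nm) *ᵥ k))) 0 := by
    have := (qCLM k).hasFDerivAt.comp_hasDerivAt (0:ℝ) hinv
    refine this.congr_deriv ?_
    change k ⬝ᵥ ((-((Λᵀ * Λ)⁻¹ * (Eᵀ * Λ + Λᵀ * E) * (Λᵀ * Λ)⁻¹)) *ᵥ k) = _
    rw [Matrix.neg_mulVec, dotProduct_neg]
  -- abbreviations
  set c2 : ℝ := 2 * π ^ 2 * c ^ (-(2:ℝ)/d) with hc2
  set K : ℝ := ρ * (2 * π) ^ ((d:ℝ)/2) / c with hK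
  set ψ'v : ℝ := M0.det * (Nm * D).trace * ((1:ℝ)/d) * M0.det ^ ((1:ℝ)/d - 1) with hψ'v
  set q'v : ℝ := -(k ⬝ᵥ ((Nm * D * Nm) *ᵥ k)) with hq'v
  set ψ0 : ℝ := M0.det ^ ((1:ℝ)/d) with hψ0
  set q0 : ℝ := k ⬝ᵥ (Nm *ᵥ k) with hq0d
  have hΛ0 : Λ + (0:ℝ) • E = Λ := by simp
  -- master algebraic identity
  have htr : (Nm * D).trace = 2 * (Λ * Nm) a b := by
    rw [hD, hE]; exact trace_ND Λ a b Nm hNs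
  have hqd : k ⬝ᵥ ((Nm * D * Nm) *ᵥ k) = 2 * (Λ *ᵥ (Nm *ᵥ k)) a * (Nm *ᵥ k) b := by
    rw [hD, hE]; exact quad_ND Λ a b k Nm hNs
  have hg : ψ'v * q0 + ψ0 * q'v = gMat k Λ a b := by
    have hrfl : gMat k Λ a b = ((2 * M0.det ^ ((1:ℝ)/d)) •
        (Λ * Nm * ((q0 / d) • (1 : Matrix (Fin d) (Fin d) ℝ) -
          Matrix.vecMulVec k k * Nm))) a b := rfl
    rw [hrfl, gMat_entry Λ a b k Nm hNs, hψ'v, hq'v, htr, hqd, hψ0,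
      Real.rpow_sub hdet0, Real.rpow_one]
    field_simp
    ring
  -- derivative of phi
  have hφd : HasDerivAt (fun s : ℝ => phiGauss ρ c k (Λ + s • E))
      (phiGauss ρ c k Λ * (-(c2 * gMat k Λ a b))) 0 := by
    have hin : HasDerivAt (fun s : ℝ => -(c2 * ((Λ + s • E)ᵀ * (Λ + s • E)).det ^ ((1:ℝ)/d) *
        (k ⬝ᵥ (((Λ + s • E)ᵀ * (Λ + s • E))⁻¹ *ᵥ k))))
        (-(c2 * ψ'v * q0 + c2 * ψ0 * q'v)) 0 := by
      have := ((hψ.const_mul c2).mul hq).neg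
      simp only [h0] at this
      exact this
    have hexp := hin.exp
    have hmul := hexp.const_mul K
    have hfun : HasDerivAt (fun s : ℝ => phiGauss ρ c k (Λ + s • E))
        (K * (Real.exp (-(c2 * ((Λ + (0:ℝ) • E)ᵀ * (Λ + (0:ℝ) • E)).det ^ ((1:ℝ)/d) *
          (k ⬝ᵥ (((Λ + (0:ℝ) • E)ᵀ * (Λ + (0:ℝ) • E))⁻¹ *ᵥ k)))) *
          (-(c2 * ψ'v * q0 + c2 * ψ0 * q'v)))) 0 := hmul
    simp only [hΛ0] at hfun
    have hφ0 : phiGauss ρ c k Λ = K * Real.exp (-(c2 * ψ0 * q0)) := rfl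
    convert hfun using 1
    rw [hφ0, ← hg]
    have hexp0 : (-(c2 * (Λᵀ * Λ).det ^ ((1:ℝ)/d) * (k ⬝ᵥ ((Λᵀ * Λ)⁻¹ *ᵥ k))))
        = -(c2 * ψ0 * q0) := rfl
    rw [hexp0]
    ring
  -- quotient rule
  have h1pos : 0 < 1 - phiGauss ρ c k Λ := by linarith
  have hsub : HasDerivAt (fun s : ℝ => 1 - phiGauss ρ c k (Λ + s • E))
      (0 - phiGauss ρ c k Λ * (-(c2 * gMat k Λ a b))) 0 := (hasDerivAt_const 0 1).sub hφd
  have hden : (fun s : ℝ => 1 - phiGauss ρ c k (Λ + s • E)) 0 ≠ 0 := by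
    simp only [hΛ0]
    exact h1pos.ne'
  have hdiv := hφd.div hsub hden
  simp only [hΛ0] at hdiv
  refine hdiv.congr_deriv ?_
  have h2 : (1 - phiGauss ρ c k Λ) ≠ 0 := h1pos.ne'
  field_simp
  ring

end Chain

theorem stmt15 (p d m : ℕ) (hd : 1 ≤ d) (hdp : d ≤ p)
    (N : ℕ) (ρ c : ℝ) (hρ : 0 < ρ) (hc : 0 < c)
    (t : Fin m → (Fin d → ℝ))
    (Λ : Matrix (Fin p) (Fin d) ℝ) (hΛ : Λ.rank = d)
    (hφ : ∀ k ∈ latticeZN d N, phiGauss ρ c (fun i => (k i : ℝ)) Λ < 1)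
    (hC : IsUnit (CappG ρ c N t Λ).det) :
    ∀ (a : Fin p) (b : Fin d),
      HasDerivAt
        (fun s : ℝ => (CappG ρ c N t (Λ + s • Matrix.single a b 1)).det)
        ((CappG ρ c N t Λ).det * ((-(2 * π ^ 2 * c ^ (-(2 : ℝ) / d)) : ℝ) : ℂ) *
          ∑ k ∈ latticeZN d N,
            ((phiGauss ρ c (fun i => (k i : ℝ)) Λ /
                (1 - phiGauss ρ c (fun i => (k i : ℝ)) Λ) ^ 2 *
                gMat (fun i => (k i : ℝ)) Λ a b : ℝ) : ℂ) *
              (vVec t k ⬝ᵥ ((CappG ρ c N t Λ)⁻¹ *ᵥ uVec t k)))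
        0 := by
  intro a b
  classical
  have hΛ0 : Λ + (0:ℝ) • Matrix.single a b (1:ℝ) = Λ := by simp
  set c2 : ℝ := 2 * π ^ 2 * c ^ (-(2:ℝ)/d) with hc2
  set fk' : (Fin d → ℤ) → ℝ := fun k =>
    -c2 * (phiGauss ρ c (fun i => (k i : ℝ)) Λ /
      (1 - phiGauss ρ c (fun i => (k i : ℝ)) Λ) ^ 2 * gMat (fun i => (k i : ℝ)) Λ a b) with hfk'
  set B : Matrix (Fin m) (Fin m) ℂ :=
    ∑ k ∈ latticeZN d N, ((fk' k : ℝ) : ℂ) • Matrix.vecMulVec (uVec t k) (vVec t k) with hBd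
  have hent : ∀ i j, HasDerivAt
      (fun s : ℝ => CappG ρ c N t (Λ + s • Matrix.single a b 1) i j) (B i j) 0 := by
    intro i j
    have hfun : (fun s : ℝ => CappG ρ c N t (Λ + s • Matrix.single a b 1) i j)
        = fun s : ℝ => ∑ k ∈ latticeZN d N,
            ((phiGauss ρ c (fun i' => (k i' : ℝ)) (Λ + s • Matrix.single a b 1) /
              (1 - phiGauss ρ c (fun i' => (k i' : ℝ)) (Λ + s • Matrix.single a b 1))
                : ℝ) : ℂ) * (uVec t k i * vVec t k j) := by
      funext s
      simp [CappG, Matrix.sum_apply, Matrix.smul_apply, Matrix.vecMulVec_apply, smul_eq_mul]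
    have hB : B i j = ∑ k ∈ latticeZN d N,
        ((fk' k : ℝ) : ℂ) * (uVec t k i * vVec t k j) := by
      simp [hBd, Matrix.sum_apply, Matrix.smul_apply, Matrix.vecMulVec_apply, smul_eq_mul]
    rw [hfun, hB]
    refine HasDerivAt.fun_sum fun k hk => ?_
    have hder := (hasDerivAt_fk Λ hΛ hd ρ c (fun i' => (k i' : ℝ)) a b (hφ k hk)).ofReal_comp
    exact hder.mul_const _
  have hdet := hasDerivAt_det (𝔸 := ℂ)
    (A := fun s : ℝ => CappG ρ c N t (Λ + s • Matrix.single a b 1)) (B := B)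
    (x := 0) hent
  simp only [hΛ0] at hdet
  refine hdet.congr_deriv ?_
  have hadj : (CappG ρ c N t Λ).adjugate = (CappG ρ c N t Λ).det • (CappG ρ c N t Λ)⁻¹ :=
    adjugate_eq_det_smul_inv _ hC
  have hterm : ∀ k ∈ latticeZN d N,
      ((CappG ρ c N t Λ).adjugate *
        (((fk' k : ℝ) : ℂ) • Matrix.vecMulVec (uVec t k) (vVec t k))).trace
      = (CappG ρ c N t Λ).det * ((-c2 : ℝ) : ℂ) *
          (((phiGauss ρ c (fun i => (k i : ℝ)) Λ /
              (1 - phiGauss ρ c (fun i => (k i : ℝ)) Λ) ^ 2 *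
              gMat (fun i => (k i : ℝ)) Λ a b : ℝ) : ℂ) *
            (vVec t k ⬝ᵥ ((CappG ρ c N t Λ)⁻¹ *ᵥ uVec t k))) := by
    intro k hk
    rw [Matrix.mul_smul, Matrix.trace_smul, smul_eq_mul, trace_mul_vecMulVec, hadj,
      Matrix.smul_mulVec, dotProduct_smul, smul_eq_mul, hfk']
    push_cast
    ring
  rw [hBd, Matrix.mul_sum, Matrix.trace_sum, Finset.sum_congr rfl hterm, ← Finset.mul_sum]
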